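/- Let f: [0,T) → ℝ be continuous with f(t) ~ c/(T−t) as t → T⁻ for some c > 0 (i.e., (T−t)f(t) → c), and let x: [0,T) → ℝ solve x'(t) = −f(t) x(t) + g(t) with g continuous and bounded on [0,T). Then x(t) → 0 as t → T⁻. -/

import Mathlib

open Filter Set

private lemma aux_upper (T c C ε : ℝ) (hT : 0 < T) (hc : 0 < c) (hε : 0 < ε)
    (f g x : ℝ → ℝ)
    (hgbdd : ∀ t ∈ Set.Ico (0:ℝ) T, |g t| ≤ C)
    (hfc : Tendsto (fun t => (T - t) * f t) (nhdsWithin T (Set.Iio T)) (nhds c))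
    (hx : ∀ t ∈ Set.Ico (0:ℝ) T,
      HasDerivWithinAt x (-(f t) * x t + g t) (Set.Ico 0 T) t) :
    ∀ᶠ t in nhdsWithin T (Set.Iio T), x t ≤ ε := by
  set C' : ℝ := max C 1 with hC'def
  have hC'pos : 0 < C' := lt_of_lt_of_le one_pos (le_max_right _ _)
  have hCC' : C ≤ C' := le_max_left _ _
  -- eventually (T - t) * f t > c/2
  have hev : ∀ᶠ t in nhdsWithin T (Set.Iio T), c / 2 < (T - t) * f t :=
    hfc.eventually (eventually_gt_nhds (by linarith))
  rw [Filter.eventually_iff, mem_nhdsLT_iff_exists_Ioo_subset] at hev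
  obtain ⟨s₀, hs₀T, hs₀⟩ := hev
  set δ : ℝ := min (T / 2) (c * ε / (4 * C')) with hδdef
  have hδpos : 0 < δ := lt_min (by linarith) (by positivity)
  set t₁ : ℝ := max (max s₀ (T - δ)) (T / 2) with ht₁def
  have ht₁T : t₁ < T := by
    apply max_lt (max_lt hs₀T (by linarith)) (by linarith)
  have ht₁pos : 0 < t₁ := lt_of_lt_of_le (by linarith) (le_max_right _ _)
  -- key properties on Ioo t₁ T
  have hmem : ∀ t ∈ Set.Ioo t₁ T, t ∈ Set.Ico (0:ℝ) T :=
    fun t ht => ⟨le_of_lt (lt_trans ht₁pos ht.1), ht.2⟩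
  have hfprop : ∀ t ∈ Set.Ioo t₁ T, c / 2 < (T - t) * f t ∧ 2 * C' ≤ f t * ε ∧ 0 < f t := by
    intro t ht
    have hts₀ : s₀ < t := lt_of_le_of_lt (le_trans (le_max_left _ _) (le_max_left _ _)) ht.1
    have h1 : c / 2 < (T - t) * f t := hs₀ ⟨hts₀, ht.2⟩
    have hTt : 0 < T - t := by linarith [ht.2]
    have hTtδ : T - t < δ := by
      have : T - δ ≤ t₁ := le_trans (le_max_right _ _) (le_max_left _ _)
      linarith [ht.1]
    have hTtδ' : T - t < c * ε / (4 * C') := lt_of_lt_of_le hTtδ (min_le_right _ _)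
    have hfpos : 0 < f t := by nlinarith
    refine ⟨h1, ?_, hfpos⟩
    rcases le_or_gt (2 * C') (f t * ε) with h | h
    · exact h
    · exfalso
      have e1 : f t * ε * (T - t) < 2 * C' * (T - t) := by
        exact mul_lt_mul_of_pos_right h hTt
      have e2 : 2 * C' * (T - t) < 2 * C' * (c * ε / (4 * C')) :=
        mul_lt_mul_of_pos_left hTtδ' (by positivity)
      have e3 : 2 * C' * (c * ε / (4 * C')) = c * ε / 2 := by
        field_simp; ring
      have e4 : c / 2 * ε < (T - t) * f t * ε := mul_lt_mul_of_pos_right h1 hε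
      nlinarith [e1, e2, e3, e4]
  have hC0 : 0 ≤ C := le_trans (abs_nonneg _) (hgbdd 0 ⟨le_refl 0, hT⟩)
  have hxc : ContinuousOn x (Set.Ico 0 T) := fun t ht => (hx t ht).continuousWithinAt
  have hderiv : ∀ t ∈ Set.Ioo (0:ℝ) T, HasDerivAt x (-(f t) * x t + g t) t := by
    intro t ht
    exact (hx t ⟨le_of_lt ht.1, ht.2⟩).hasDerivAt
      (mem_of_superset (Ioo_mem_nhds ht.1 ht.2) Ioo_subset_Ico_self)
  -- Step A: there exists t₂ ∈ Ioo t₁ T with x t₂ ≤ ε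
  have stepA : ∃ t₂ ∈ Set.Ioo t₁ T, x t₂ ≤ ε := by
    by_contra hcon
    push_neg at hcon
    set a : ℝ := (t₁ + T) / 2 with hadef
    have haIoo : a ∈ Set.Ioo t₁ T := ⟨by linarith, by linarith⟩
    set y : ℝ → ℝ := fun t => x t - ε * c / 4 * Real.log (T - t) with hydef
    have hyd : ∀ t ∈ Set.Ioo t₁ T,
        HasDerivAt y ((-(f t) * x t + g t) - ε * c / 4 * (-1 / (T - t))) t := by
      intro t htIoo
      have hTt : 0 < T - t := by linarith [htIoo.2]
      have hlogd : HasDerivAt (fun t => Real.log (T - t)) (-1 / (T - t)) t := by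
        have h1 : HasDerivAt (fun t : ℝ => T - t) (-1) t := (hasDerivAt_id t).const_sub T
        exact h1.log (ne_of_gt hTt)
      exact (hderiv t ⟨lt_trans ht₁pos htIoo.1, htIoo.2⟩).sub (hlogd.const_mul (ε * c / 4))
    have hyanti : AntitoneOn y (Set.Ico a T) := by
      apply antitoneOn_of_deriv_nonpos (convex_Ico a T)
      · apply ContinuousOn.sub
        · exact hxc.mono (fun t ht => hmem t ⟨lt_of_lt_of_le haIoo.1 ht.1, ht.2⟩)
        · apply ContinuousOn.mul continuousOn_const
          apply ContinuousOn.log (continuousOn_const.sub continuousOn_id)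
          intro t ht
          simp only [Pi.sub_apply, id]
          nlinarith [ht.2]
      · intro t ht
        rw [interior_Ico] at ht
        have htIoo : t ∈ Set.Ioo t₁ T := ⟨lt_trans haIoo.1 ht.1, ht.2⟩
        exact (hyd t htIoo).differentiableAt.differentiableWithinAt
      · intro t ht
        rw [interior_Ico] at ht
        have htIoo : t ∈ Set.Ioo t₁ T := ⟨lt_trans haIoo.1 ht.1, ht.2⟩
        have hTt : 0 < T - t := by linarith [ht.2]
        rw [(hyd t htIoo).deriv]
        obtain ⟨hf1, hf2, hf3⟩ := hfprop t htIoo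
        have hgt : g t ≤ C := (abs_le.mp (hgbdd t (hmem t htIoo))).2
        have hxgt : ε < x t := hcon t htIoo
        have h1 : ε * c / 4 * (1 / (T - t)) ≤ f t * ε / 2 := by
          rw [mul_one_div, div_le_iff₀ hTt]
          nlinarith
        have h2 : -(f t) * x t + g t ≤ -(f t * ε / 2) := by
          nlinarith [mul_pos hf3 (sub_pos.mpr hxgt)]
        have : ε * c / 4 * (-1 / (T - t)) = -(ε * c / 4 * (1 / (T - t))) := by ring
        rw [this]
        linarith
    -- pick t close to T to contradict x t > ε
    set r : ℝ := min ((T - a) / 2) (Real.exp ((ε - y a) * (4 / (ε * c)))) with hrdef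
    have hrpos : 0 < r := lt_min (by linarith [haIoo.2]) (Real.exp_pos _)
    set t : ℝ := T - r with htdef
    have htmem : t ∈ Set.Ico a T := by
      constructor
      · have : r ≤ (T - a) / 2 := min_le_left _ _
        simp only [htdef]; linarith
      · simp only [htdef]; linarith
    have hle : y t ≤ y a := hyanti ⟨le_refl a, haIoo.2⟩ htmem htmem.1
    have hTtr : T - t = r := by simp [htdef]
    have hlogle : Real.log (T - t) ≤ (ε - y a) * (4 / (ε * c)) := by
      rw [hTtr]
      calc Real.log r ≤ Real.log (Real.exp ((ε - y a) * (4 / (ε * c)))) :=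
            Real.log_le_log hrpos (min_le_right _ _)
        _ = (ε - y a) * (4 / (ε * c)) := Real.log_exp _
    have hxt : x t ≤ ε := by
      have h1 : x t = y t + ε * c / 4 * Real.log (T - t) := by
        simp only [hydef]; ring
      have h2 : ε * c / 4 * Real.log (T - t) ≤ ε - y a := by
        calc ε * c / 4 * Real.log (T - t)
            ≤ ε * c / 4 * ((ε - y a) * (4 / (ε * c))) :=
              mul_le_mul_of_nonneg_left hlogle (by positivity)
          _ = ε - y a := by field_simp
      calc x t = y t + ε * c / 4 * Real.log (T - t) := h1
        _ ≤ y a + (ε - y a) := add_le_add hle h2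
        _ = ε := by ring
    have : ε < x t := hcon t ⟨lt_of_lt_of_le haIoo.1 htmem.1, htmem.2⟩
    linarith
  obtain ⟨t₂, ht₂, hxt₂⟩ := stepA
  -- Step B: forward invariance
  have stepB : ∀ s ∈ Set.Ico t₂ T, x s ≤ ε := by
    intro s hs
    by_contra hxs
    push_neg at hxs
    have hts : t₂ < s := by
      rcases lt_or_eq_of_le hs.1 with h | h
      · exact h
      · exfalso; rw [← h] at hxs; linarith
    have hssub : Set.Icc t₂ s ⊆ Set.Ico 0 T :=
      fun r hr => ⟨le_trans (le_of_lt (lt_trans ht₁pos ht₂.1)) hr.1, lt_of_le_of_lt hr.2 hs.2⟩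
    set K : Set ℝ := Set.Icc t₂ s ∩ x ⁻¹' Set.Iic ε with hKdef
    have hKclosed : IsClosed K :=
      ContinuousOn.preimage_isClosed_of_isClosed (hxc.mono hssub) isClosed_Icc isClosed_Iic
    have hKne : K.Nonempty := ⟨t₂, ⟨le_refl _, le_of_lt hts⟩, hxt₂⟩
    have hKbdd : BddAbove K := BddAbove.mono (fun r hr => hr.1) bddAbove_Icc
    set u : ℝ := sSup K with hudef
    have huK : u ∈ K := hKclosed.csSup_mem hKne hKbdd
    have hus : u < s := by
      rcases lt_or_eq_of_le huK.1.2 with h | h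
      · exact h
      · exfalso; rw [h] at huK; exact absurd huK.2 (not_le.mpr hxs)
    have hgtu : ∀ r ∈ Set.Ioo u s, ε < x r := by
      intro r hr
      by_contra hcon
      push_neg at hcon
      have : r ∈ K := ⟨⟨le_trans huK.1.1 (le_of_lt hr.1), le_of_lt hr.2⟩, hcon⟩
      exact absurd (le_csSup hKbdd this) (not_le.mpr hr.1)
    have hanti : AntitoneOn x (Set.Icc u s) := by
      apply antitoneOn_of_deriv_nonpos (convex_Icc u s)
      · exact hxc.mono (fun r hr => hssub ⟨le_trans huK.1.1 hr.1, hr.2⟩)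
      · intro r hr
        rw [interior_Icc] at hr
        have hrIoo : r ∈ Set.Ioo t₁ T :=
          ⟨lt_of_le_of_lt (le_of_lt ht₂.1) (lt_of_le_of_lt huK.1.1 hr.1),
            lt_trans hr.2 hs.2⟩
        exact (hderiv r ⟨lt_trans ht₁pos hrIoo.1, hrIoo.2⟩).differentiableAt.differentiableWithinAt
      · intro r hr
        rw [interior_Icc] at hr
        have hrIoo : r ∈ Set.Ioo t₁ T :=
          ⟨lt_of_le_of_lt (le_of_lt ht₂.1) (lt_of_le_of_lt huK.1.1 hr.1),
            lt_trans hr.2 hs.2⟩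
        have hd : HasDerivAt x (-(f r) * x r + g r) r :=
          hderiv r ⟨lt_trans ht₁pos hrIoo.1, hrIoo.2⟩
        rw [hd.deriv]
        obtain ⟨hf1, hf2, hf3⟩ := hfprop r hrIoo
        have hgr : g r ≤ C := (abs_le.mp (hgbdd r (hmem r hrIoo))).2
        have hxr : ε < x r := hgtu r hr
        nlinarith [mul_pos hf3 (sub_pos.mpr hxr)]
    have hxu : x u ≤ ε := huK.2
    have : x s ≤ x u := hanti ⟨le_refl u, le_of_lt hus⟩ ⟨le_of_lt hus, le_refl s⟩ (le_of_lt hus)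
    linarith
  filter_upwards [Ioo_mem_nhdsLT_of_mem (⟨ht₂.2, le_refl T⟩ : T ∈ Set.Ioc t₂ T)] with t ht
  exact stepB t ⟨le_of_lt ht.1, ht.2⟩

theorem stmt_19 (T c : ℝ) (hT : 0 < T) (hc : 0 < c)
    (f g x : ℝ → ℝ)
    (hf : ContinuousOn f (Set.Ico 0 T))
    (hg : ContinuousOn g (Set.Ico 0 T))
    (hgbdd : ∃ C : ℝ, ∀ t ∈ Set.Ico (0:ℝ) T, |g t| ≤ C)
    (hfc : Tendsto (fun t => (T - t) * f t) (nhdsWithin T (Set.Iio T)) (nhds c))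
    (hx : ∀ t ∈ Set.Ico (0:ℝ) T,
      HasDerivWithinAt x (-(f t) * x t + g t) (Set.Ico 0 T) t) :
    Tendsto x (nhdsWithin T (Set.Iio T)) (nhds 0) := by
  obtain ⟨C, hC⟩ := hgbdd
  rw [NormedAddCommGroup.tendsto_nhds_zero]
  intro ε hε
  have h1 := aux_upper T c C (ε / 2) hT hc (by linarith) f g x hC hfc hx
  have hxneg : ∀ t ∈ Set.Ico (0:ℝ) T,
      HasDerivWithinAt (fun t => -x t) (-(f t) * (-x t) + (-g t)) (Set.Ico 0 T) t := by
    intro t ht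
    have : HasDerivWithinAt (fun t => -x t) _ _ _ := (hx t ht).neg
    convert this using 1
    ring
  have hgneg : ∀ t ∈ Set.Ico (0:ℝ) T, |(-g ·) t| ≤ C := by
    intro t ht; simpa using hC t ht
  have h2 := aux_upper T c C (ε / 2) hT hc (by linarith) f (fun t => -g t) (fun t => -x t)
    hgneg hfc hxneg
  filter_upwards [h1, h2] with t h1t h2t
  have h2t' : -x t ≤ ε / 2 := h2t
  rw [Real.norm_eq_abs, abs_lt]
  constructor <;> linarith
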